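/- For any d ≥ 2 and any feature index i ∈ [d], the sum over all subsets S of [d] containing i (with S ≠ ∅ and S ≠ [d] not required, but 1 ≤ |S| ≤ d−1) of the kernel weight k(S) = (d−1)/(binom(d,|S|)·|S|·(d−|S|)) equals (d−1)·H_{d−1}/d, where H_n = ∑_{j=1}^n 1/j is the n-th harmonic number. -/

import Mathlib

open Finset

lemma count_aux (d : ℕ) (i : Fin d) (h : ℕ) (hh : 1 ≤ h) :
    ((Finset.univ.filter (fun S : Finset (Fin d) => i ∈ S ∧ S.card = h)).card)
      = (d - 1).choose (h - 1) := by
  have : (Finset.univ.filter (fun S : Finset (Fin d) => i ∈ S ∧ S.card = h)).card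
      = (((Finset.univ.erase i).powersetCard (h - 1))).card := by
    refine Finset.card_bij' (fun S _ => S.erase i) (fun T _ => insert i T) ?_ ?_ ?_ ?_
    · intro S hS
      simp only [mem_filter, mem_univ, true_and] at hS
      rw [Finset.mem_powersetCard]
      constructor
      · intro x hx
        simp only [Finset.mem_erase] at hx ⊢
        exact ⟨hx.1, Finset.mem_univ _⟩
      · rw [Finset.card_erase_of_mem hS.1, hS.2]
    · intro T hT
      rw [Finset.mem_powersetCard] at hT
      have hiT : i ∉ T := fun hmem => by
        have := hT.1 hmem
        simp at this
      simp only [mem_filter, mem_univ, true_and]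
      refine ⟨Finset.mem_insert_self _ _, ?_⟩
      rw [Finset.card_insert_of_notMem hiT, hT.2]
      omega
    · intro S hS
      simp only [mem_filter, mem_univ, true_and] at hS
      exact Finset.insert_erase hS.1
    · intro T hT
      rw [Finset.mem_powersetCard] at hT
      have hiT : i ∉ T := fun hmem => by
        have := hT.1 hmem
        simp at this
      exact Finset.erase_insert hiT
  rw [this, Finset.card_powersetCard, Finset.card_erase_of_mem (Finset.mem_univ i),
    Finset.card_univ, Fintype.card_fin]

/-- For any `d ≥ 2` and any feature index `i`, the sum over all subsets `S` of `[d]`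
containing `i` with `1 ≤ |S| ≤ d-1` of the kernel weight
`k(S) = (d-1)/(C(d,|S|)·|S|·(d-|S|))` equals `(d-1)·H_{d-1}/d`. -/
theorem stmt_0 (d : ℕ) (hd : 2 ≤ d) (i : Fin d) :
    ∑ S ∈ Finset.univ.filter
        (fun S : Finset (Fin d) => i ∈ S ∧ 1 ≤ S.card ∧ S.card ≤ d - 1),
      ((d : ℝ) - 1) / ((d.choose S.card : ℝ) * (S.card : ℝ) * ((d : ℝ) - (S.card : ℝ)))
      = ((d : ℝ) - 1) * (∑ j ∈ Finset.Icc 1 (d - 1), (1 : ℝ) / (j : ℝ)) / (d : ℝ) := by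
  set P := fun S : Finset (Fin d) => i ∈ S ∧ 1 ≤ S.card ∧ S.card ≤ d - 1
  have hmaps : ∀ S ∈ Finset.univ.filter P, S.card ∈ Finset.Icc 1 (d - 1) := by
    intro S hS
    simp only [P, mem_filter] at hS
    simp [hS.2.2.1, hS.2.2.2]
  rw [← Finset.sum_fiberwise_of_maps_to hmaps]
  have key : ∀ h ∈ Finset.Icc 1 (d - 1),
      (∑ S ∈ (Finset.univ.filter P).filter (fun S => S.card = h),
        ((d : ℝ) - 1) / ((d.choose S.card : ℝ) * (S.card : ℝ) * ((d : ℝ) - (S.card : ℝ))))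
      = ((d : ℝ) - 1) / (d : ℝ) * (1 / ((d : ℝ) - (h : ℝ))) := by
    intro h hh
    rw [Finset.mem_Icc] at hh
    have hcard : ((Finset.univ.filter P).filter (fun S => S.card = h))
        = Finset.univ.filter (fun S : Finset (Fin d) => i ∈ S ∧ S.card = h) := by
      ext S
      simp only [mem_filter, mem_univ, true_and, P]
      constructor
      · rintro ⟨⟨h1, _, _⟩, h2⟩; exact ⟨h1, h2⟩
      · rintro ⟨h1, h2⟩; exact ⟨⟨h1, by omega, by omega⟩, h2⟩
    rw [hcard]
    have hsum : ∑ S ∈ Finset.univ.filter (fun S : Finset (Fin d) => i ∈ S ∧ S.card = h),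
        ((d : ℝ) - 1) / ((d.choose S.card : ℝ) * (S.card : ℝ) * ((d : ℝ) - (S.card : ℝ)))
      = ∑ _S ∈ Finset.univ.filter (fun S : Finset (Fin d) => i ∈ S ∧ S.card = h),
        ((d : ℝ) - 1) / ((d.choose h : ℝ) * (h : ℝ) * ((d : ℝ) - (h : ℝ))) := by
      refine Finset.sum_congr rfl fun S hS => ?_
      rw [mem_filter] at hS
      rw [hS.2.2]
    rw [hsum, Finset.sum_const, count_aux d i h hh.1, nsmul_eq_mul]
    have hch : (d : ℝ) * ((d - 1).choose (h - 1) : ℝ) = (d.choose h : ℝ) * (h : ℝ) := by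
      have := Nat.add_one_mul_choose_eq (d - 1) (h - 1)
      have h1 : d - 1 + 1 = d := by omega
      have h2 : h - 1 + 1 = h := by omega
      rw [h1, h2] at this
      exact_mod_cast congrArg (Nat.cast (R := ℝ)) this
    have hd0 : (d : ℝ) ≠ 0 := by positivity
    have hh0 : (h : ℝ) ≠ 0 := by
      have : 0 < h := hh.1
      positivity
    have hch0 : (d.choose h : ℝ) ≠ 0 := by
      have : 0 < d.choose h := Nat.choose_pos (by omega)
      positivity
    have hdh : (d : ℝ) - (h : ℝ) ≠ 0 := by
      have : (h : ℝ) < (d : ℝ) := by exact_mod_cast (by omega : h < d)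
      linarith
    field_simp
    linear_combination ((d : ℝ) - 1) * hch
  rw [Finset.sum_congr rfl key, ← Finset.mul_sum]
  have hre : (∑ h ∈ Finset.Icc 1 (d - 1), 1 / ((d : ℝ) - (h : ℝ)))
      = ∑ j ∈ Finset.Icc 1 (d - 1), (1 : ℝ) / (j : ℝ) := by
    apply Finset.sum_nbij' (fun h => d - h) (fun j => d - j)
    all_goals intro a ha
    · rw [Finset.mem_Icc] at ha ⊢; omega
    · rw [Finset.mem_Icc] at ha ⊢; omega
    · rw [Finset.mem_Icc] at ha; omega
    · rw [Finset.mem_Icc] at ha; omega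
    · rw [Finset.mem_Icc] at ha
      congr 1
      have : ((d - a : ℕ) : ℝ) = (d : ℝ) - (a : ℝ) := by
        have : a ≤ d := by omega
        push_cast [this]; ring
      rw [this]
  rw [hre]
  ring
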